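/- Let M be a ℤ-module and Q : M → ℤ a quadratic map, with polar form B(x,y) := Q(x+y) − Q(x) − Q(y). Let c : M →+ ℤ be an additive homomorphism and v ∈ M an element with c(v) = 2, and assume Q(y − c(y)•v) = Q(y) for all y ∈ M. Fix a positive integer n, and let y ∈ M be such that n divides B(y, z) for every z ∈ M. Then n / gcd(Q(v), n) divides c(y). -/

import Mathlib

open QuadraticMap in
private lemma key_step {M : Type*} [AddCommGroup M] [Module ℤ M] (Q : QuadraticMap ℤ M ℤ)
    (c : M →+ ℤ) (v : M)
    (hinv : ∀ y : M, Q (y - c y • v) = Q y) (w : M) :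
    c w * polar (⇑Q) w v = c w * (c w * Q v) := by
  have h := hinv w
  simp only [← Int.cast_smul_eq_zsmul ℤ, Int.cast_id] at h
  rw [sub_eq_add_neg, ← neg_smul, QuadraticMap.map_add (⇑Q),
    QuadraticMap.map_smul, polar_smul_right] at h
  simp only [smul_eq_mul] at h
  nlinarith [h]

/-- Lemma (`n_α` divides `⟨α, y⟩` for `y ∈ Y_{Q,n}`):
Let `M` be a `ℤ`-module, `Q : M → ℤ` a quadratic map with polar form
`B(x,y) = Q(x+y) - Q x - Q y`, `c : M →+ ℤ` with `c v = 2`, `Q` invariant under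
the reflection `y ↦ y - c y • v`.  If `n ∣ B(y, z)` for all `z`, then
`n / gcd(Q v, n)` divides `c y`. -/
theorem nAlpha_dvd_pairing_of_mem_YQn
    {M : Type*} [AddCommGroup M] [Module ℤ M] (Q : QuadraticMap ℤ M ℤ)
    (c : M →+ ℤ) (v : M) (hcv : c v = 2)
    (hinv : ∀ y : M, Q (y - c y • v) = Q y)
    (n : ℕ) (hn : 0 < n) (y : M)
    (hy : ∀ z : M, (n : ℤ) ∣ QuadraticMap.polar (⇑Q) y z) :
    ((n / Int.gcd (Q v) (n : ℤ) : ℕ) : ℤ) ∣ c y := by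
  -- Step 1: polar Q y v = c y * Q v
  have hpvv : QuadraticMap.polar (⇑Q) v v = 2 * Q v := by
    have h1 : QuadraticMap.polar (⇑Q) v v = Q (v + v) - Q v - Q v := rfl
    have h2 : Q (v + v) = 4 * Q v := by
      rw [QuadraticMap.map_add_self]; simp [smul_eq_mul]
    rw [h1, h2]; ring
  have h1 := key_step Q c v hinv y
  have h2 := key_step Q c v hinv (y + v)
  have hcyv : c (y + v) = c y + 2 := by simp [hcv]
  have hpadd : QuadraticMap.polar (⇑Q) (y + v) v
      = QuadraticMap.polar (⇑Q) y v + 2 * Q v := by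
    rw [QuadraticMap.polar_add_left, hpvv]
  rw [hcyv, hpadd] at h2
  have hpol : QuadraticMap.polar (⇑Q) y v = c y * Q v := by nlinarith [h1, h2]
  -- Step 2: n ∣ c y * Q v
  have hdvd : (n : ℤ) ∣ c y * Q v := hpol ▸ hy v
  -- Step 3: conclude by coprimality
  set a : ℤ := Q v
  set g : ℕ := Int.gcd a (n : ℤ) with hg
  have hg0 : 0 < g := Int.gcd_pos_of_ne_zero_right a (by exact_mod_cast hn.ne')
  have hgz : (g : ℤ) ≠ 0 := by exact_mod_cast hg0.ne'
  have hga : (g : ℤ) ∣ a := Int.gcd_dvd_left a (n : ℤ)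
  have hgn : g ∣ n := by
    have : (g : ℤ) ∣ (n : ℤ) := Int.gcd_dvd_right a (n : ℤ)
    exact_mod_cast this
  obtain ⟨a', ha'⟩ := hga
  obtain ⟨n', hn'⟩ := hgn
  have hnn' : n / g = n' := by rw [hn', Nat.mul_div_cancel_left _ hg0]
  rw [hnn']
  have hcop : IsCoprime (a' : ℤ) (n' : ℤ) := by
    rw [Int.isCoprime_iff_gcd_eq_one]
    have hmul : Int.gcd ((g : ℤ) * a') ((g : ℤ) * n') = g * Int.gcd a' (n' : ℤ) := by
      rw [Int.gcd_mul_left]; simp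
    have hgn2 : ((g : ℤ) * n') = (n : ℤ) := by exact_mod_cast hn'.symm
    rw [← ha', hgn2, ← hg] at hmul
    nlinarith [hmul, Int.gcd_pos_of_ne_zero_right a' (show (n' : ℤ) ≠ 0 by
      intro h0; rw [h0, mul_zero] at hgn2; exact_mod_cast absurd hgn2.symm (by exact_mod_cast hn.ne'))]
  have hdvd2 : (n' : ℤ) ∣ c y * a' := by
    have hd : (g : ℤ) * n' ∣ (g : ℤ) * (c y * a') := by
      calc (g : ℤ) * n' = (n : ℤ) := by exact_mod_cast hn'.symm
        _ ∣ c y * a := hdvd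
        _ = (g : ℤ) * (c y * a') := by rw [ha']; ring
    exact (mul_dvd_mul_iff_left hgz).mp hd
  exact hcop.symm.dvd_of_dvd_mul_right hdvd2
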